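/- Define F : (0,1) → ℝ by F(t) := ∫_0^{√(−ln t)} √(e^{−2x²} − t²) dx. Then F is differentiable on (0,1) and for every t ∈ (0,1), F′(t) = −t · ∫_0^{√(−ln t)} (e^{−2x²} − t²)^{−1/2} dx, where the latter (improper) integral converges. -/

import Mathlib

open MeasureTheory intervalIntegral

/-- The WKB quantization integral for the Gaussian potential `A₀(x) = e^{−x²}`. -/
noncomputable def F (t : ℝ) : ℝ :=
  ∫ x in (0 : ℝ)..(Real.sqrt (-Real.log t)), Real.sqrt (Real.exp (-2 * x ^ 2) - t ^ 2)

open Set Filter Topology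

noncomputable def bb (s : ℝ) : ℝ := Real.sqrt (-Real.log s)
noncomputable def w (s x : ℝ) : ℝ := (Real.exp (-2 * x ^ 2) - s ^ 2) ^ (-(1:ℝ)/2)

lemma rpow_nh_of_nonpos {v : ℝ} (hv : v ≤ 0) : v ^ (-(1:ℝ)/2) = 0 := by
  rcases eq_or_lt_of_le hv with h | h
  · subst h; rw [Real.zero_rpow (by norm_num)]
  · rw [Real.rpow_def_of_neg h]
    have : Real.cos (-(1:ℝ)/2 * Real.pi) = 0 := by
      rw [show (-(1:ℝ)/2 * Real.pi) = -(Real.pi/2) by ring, Real.cos_neg, Real.cos_pi_div_two]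
    rw [this, mul_zero]

lemma rpow_nh_eq_inv_sqrt {v : ℝ} (hv : 0 ≤ v) : v ^ (-(1:ℝ)/2) = (Real.sqrt v)⁻¹ := by
  rw [show (-(1:ℝ)/2) = -(1/2 : ℝ) by ring, Real.rpow_neg hv, Real.sqrt_eq_rpow]

lemma rpow_nh_nonneg (v : ℝ) : 0 ≤ v ^ (-(1:ℝ)/2) := by
  rcases le_or_gt v 0 with h | h
  · rw [rpow_nh_of_nonpos h]
  · exact Real.rpow_nonneg h.le _

lemma rpow_nh_le {v u : ℝ} (hu : 0 < u) (huv : u ≤ v) : v ^ (-(1:ℝ)/2) ≤ u ^ (-(1:ℝ)/2) :=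
  Real.rpow_le_rpow_of_nonpos hu huv (by norm_num)

/-- integrability from an inverse-sqrt bound -/
lemma intInt_of_inv_sqrt_bound {m : ℝ → ℝ} {A B e K : ℝ}
    (hm : AEStronglyMeasurable m (volume.restrict (Set.uIoc A B)))
    (hb : ∀ y ∈ Set.uIoc A B, ‖m y‖ ≤ K * (e - y) ^ (-(1:ℝ)/2)) :
    IntervalIntegrable m volume A B := by
  have hg : IntervalIntegrable (fun y => K * (e - y) ^ (-(1:ℝ)/2)) volume A B := by
    have h1 : IntervalIntegrable (fun x : ℝ => x ^ (-(1:ℝ)/2)) volume (e - B) (e - A) :=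
      intervalIntegrable_rpow' (by norm_num)
    simpa using ((h1.comp_sub_left e).const_mul K).symm
  exact hg.mono_fun' hm ((ae_restrict_iff' measurableSet_uIoc).mpr
    (Filter.Eventually.of_forall hb))

lemma sq_exp (y : ℝ) : Real.exp y ^ 2 = Real.exp (2 * y) := by
  rw [sq, ← Real.exp_add]; ring_nf

lemma base_lb {s : ℝ} (hs : 0 < s) (x : ℝ) :
    s ^ 2 * (2 * (-Real.log s - x ^ 2)) ≤ Real.exp (-2 * x ^ 2) - s ^ 2 := by
  have hs2 : s ^ 2 = Real.exp (2 * Real.log s) := by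
    rw [← sq_exp, Real.exp_log hs]
  have h1 : Real.exp (-2 * x ^ 2) =
      s ^ 2 * Real.exp (2 * (-Real.log s - x ^ 2)) := by
    rw [hs2, ← Real.exp_add]; ring_nf
  have h2 := Real.add_one_le_exp (2 * (-Real.log s - x ^ 2))
  nlinarith [sq_nonneg s, pow_pos hs 2]

lemma w_nonneg (s x : ℝ) : 0 ≤ w s x := rpow_nh_nonneg _

lemma w_meas (s : ℝ) : Measurable (w s) := by
  unfold w
  apply Measurable.pow <;> measurability

lemma bb_nonneg (s : ℝ) : 0 ≤ bb s := Real.sqrt_nonneg _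

lemma bb_sq {s : ℝ} (hs0 : 0 < s) (hs1 : s ≤ 1) : bb s ^ 2 = -Real.log s :=
  Real.sq_sqrt (by simpa using Real.log_nonpos hs0.le hs1)

lemma bb_pos {s : ℝ} (hs0 : 0 < s) (hs1 : s < 1) : 0 < bb s :=
  Real.sqrt_pos.mpr (by simpa using Real.log_neg hs0 hs1)

lemma bb_mono {s r : ℝ} (hs : 0 < s) (hsr : s ≤ r) : bb r ≤ bb s :=
  Real.sqrt_le_sqrt (by simpa using Real.log_le_log hs hsr)

/-- for `x` beyond the turning point the integrand vanishes -/
lemma w_eq_zero {s x : ℝ} (hs0 : 0 < s) (hs1 : s ≤ 1) (hx : bb s ≤ x) : w s x = 0 := by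
  apply rpow_nh_of_nonpos
  have hx2 : -Real.log s ≤ x ^ 2 := by
    rw [← bb_sq hs0 hs1]
    exact pow_le_pow_left₀ (bb_nonneg s) hx 2
  have : Real.exp (-2 * x ^ 2) ≤ s ^ 2 := by
    have : Real.exp (-2 * x ^ 2) ≤ Real.exp (2 * Real.log s) := by
      apply Real.exp_le_exp.mpr; nlinarith
    rwa [← sq_exp, Real.exp_log hs0] at this
  linarith

lemma w_int {s : ℝ} (hs0 : 0 < s) (hs1 : s < 1) :
    IntervalIntegrable (w s) volume 0 (bb s) := by
  set B := bb s with hB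
  have hBpos : 0 < B := bb_pos hs0 hs1
  apply intInt_of_inv_sqrt_bound (e := B) (K := (2 * s ^ 2 * B) ^ (-(1:ℝ)/2))
    ((w_meas s).aestronglyMeasurable)
  intro y hy
  rw [uIoc_of_le hBpos.le] at hy
  rw [Real.norm_eq_abs, abs_of_nonneg (w_nonneg s y)]
  rcases eq_or_lt_of_le hy.2 with h | h
  · rw [h, w_eq_zero hs0 hs1.le le_rfl, sub_self, rpow_nh_of_nonpos le_rfl, mul_zero]
  · have hlow : 2 * s ^ 2 * B * (B - y) ≤ Real.exp (-2 * y ^ 2) - s ^ 2 := by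
      have h1 := base_lb hs0 y
      have h2 : -Real.log s = B ^ 2 := (bb_sq hs0 hs1.le).symm
      nlinarith [mul_nonneg (mul_nonneg (sq_nonneg s) (sub_pos.mpr h).le) hy.1.le]
    have hpos : 0 < 2 * s ^ 2 * B * (B - y) :=
      mul_pos (mul_pos (by positivity) hBpos) (sub_pos.mpr h)
    calc w s y ≤ (2 * s ^ 2 * B * (B - y)) ^ (-(1:ℝ)/2) := rpow_nh_le hpos hlow
      _ = (2 * s ^ 2 * B) ^ (-(1:ℝ)/2) * (B - y) ^ (-(1:ℝ)/2) :=
        Real.mul_rpow (mul_nonneg (by positivity) hBpos.le) (by linarith)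

lemma L1int {a c e : ℝ} (hc : 0 < c) (hce : c ≤ e) (hea : e ≤ a) (ha1 : a ≤ 1) :
    IntervalIntegrable (fun s => s * (a ^ 2 - s ^ 2) ^ (-(1:ℝ)/2)) volume c e := by
  apply intInt_of_inv_sqrt_bound (e := a) (K := c ^ (-(1:ℝ)/2))
    (by apply Measurable.aestronglyMeasurable; apply Measurable.mul measurable_id
        apply Measurable.pow <;> measurability)
  intro s hs
  rw [uIoc_of_le hce] at hs
  have hs0 : 0 < s := hc.trans hs.1
  have hsa : s ≤ a := hs.2.trans hea
  have hnn : 0 ≤ s * (a ^ 2 - s ^ 2) ^ (-(1:ℝ)/2) :=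
    mul_nonneg hs0.le (rpow_nh_nonneg _)
  rw [Real.norm_eq_abs, abs_of_nonneg hnn]
  rcases eq_or_lt_of_le hsa with h | h
  · rw [h, sub_self, rpow_nh_of_nonpos le_rfl, mul_zero]
    exact mul_nonneg (rpow_nh_nonneg _) (rpow_nh_nonneg _)
  · have hlow : c * (a - s) ≤ a ^ 2 - s ^ 2 := by nlinarith [hs.1, hc]
    have hpos : 0 < c * (a - s) := mul_pos hc (by linarith)
    have h1 : (a ^ 2 - s ^ 2) ^ (-(1:ℝ)/2) ≤ (c * (a - s)) ^ (-(1:ℝ)/2) :=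
      rpow_nh_le hpos hlow
    have h2 : (c * (a - s)) ^ (-(1:ℝ)/2) = c ^ (-(1:ℝ)/2) * (a - s) ^ (-(1:ℝ)/2) :=
      Real.mul_rpow hc.le (by linarith)
    calc s * (a ^ 2 - s ^ 2) ^ (-(1:ℝ)/2)
        ≤ 1 * ((c * (a - s)) ^ (-(1:ℝ)/2)) :=
          mul_le_mul (hsa.trans ha1) h1 (rpow_nh_nonneg _) (by norm_num)
      _ = c ^ (-(1:ℝ)/2) * (a - s) ^ (-(1:ℝ)/2) := by rw [one_mul, h2]

lemma L1zero {a s : ℝ} (ha : 0 ≤ a) (hs : a ≤ s) :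
    s * (a ^ 2 - s ^ 2) ^ (-(1:ℝ)/2) = 0 := by
  rw [rpow_nh_of_nonpos (by nlinarith), mul_zero]

lemma L1ftc {a c d : ℝ} (hc : 0 < c) (hcd : c ≤ d) (hda : d ≤ a) (ha1 : a ≤ 1) :
    ∫ s in c..d, s * (a ^ 2 - s ^ 2) ^ (-(1:ℝ)/2)
      = Real.sqrt (a ^ 2 - c ^ 2) - Real.sqrt (a ^ 2 - d ^ 2) := by
  have hcont : ContinuousOn (fun s => -Real.sqrt (a ^ 2 - s ^ 2)) (Icc c d) :=
    ((Real.continuous_sqrt.comp (by continuity)).neg).continuousOn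
  have hderiv : ∀ s ∈ Ioo c d,
      HasDerivAt (fun s => -Real.sqrt (a ^ 2 - s ^ 2))
        (s * (a ^ 2 - s ^ 2) ^ (-(1:ℝ)/2)) s := by
    intro s hs
    have hs0 : 0 < s := hc.trans hs.1
    have hsa : s < a := hs.2.trans_le hda
    have hX : 0 < a ^ 2 - s ^ 2 := by nlinarith
    have hsq : 0 < Real.sqrt (a ^ 2 - s ^ 2) := Real.sqrt_pos.mpr hX
    have inner : HasDerivAt (fun s : ℝ => a ^ 2 - s ^ 2) (-(2 * s ^ 1)) s :=
      (hasDerivAt_pow 2 s).const_sub (a ^ 2)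
    have hcomp := ((Real.hasDerivAt_sqrt hX.ne').comp s inner).neg
    refine hcomp.congr_deriv (Eq.symm ?_)
    rw [rpow_nh_eq_inv_sqrt hX.le]
    field_simp
  have := intervalIntegral.integral_eq_sub_of_hasDerivAt_of_le hcd hcont hderiv
    (L1int hc hcd hda ha1)
  rw [this]; ring

lemma L1 {a c d : ℝ} (hc : 0 < c) (hca : c ≤ a) (ha1 : a ≤ 1) (hcd : c ≤ d) :
    ∫ s in c..d, s * (a ^ 2 - s ^ 2) ^ (-(1:ℝ)/2)
      = Real.sqrt (a ^ 2 - c ^ 2) - Real.sqrt (a ^ 2 - d ^ 2) := by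
  rcases le_or_gt d a with hd | hd
  · exact L1ftc hc hcd hd ha1
  · have ha0 : 0 ≤ a := hc.le.trans hca
    have hIad : IntervalIntegrable (fun s => s * (a ^ 2 - s ^ 2) ^ (-(1:ℝ)/2)) volume a d := by
      apply IntervalIntegrable.mono_fun' (g := fun _ => (0:ℝ)) intervalIntegrable_const
      · apply Measurable.aestronglyMeasurable; apply Measurable.mul measurable_id
        apply Measurable.pow <;> measurability
      · refine (ae_restrict_iff' measurableSet_uIoc).mpr (Filter.Eventually.of_forall ?_)
        intro s hs
        rw [uIoc_of_le hd.le] at hs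
        show ‖s * (a ^ 2 - s ^ 2) ^ (-(1:ℝ)/2)‖ ≤ 0
        rw [Real.norm_eq_abs, L1zero ha0 hs.1.le, abs_zero]
    have hzero : (∫ s in a..d, s * (a ^ 2 - s ^ 2) ^ (-(1:ℝ)/2)) = 0 := by
      rw [intervalIntegral.integral_congr (g := fun _ => (0:ℝ))
        (fun s hs => L1zero ha0 (by
          rw [uIcc_of_le hd.le] at hs; exact hs.1))]
      simp
    have hsplit := intervalIntegral.integral_add_adjacent_intervals
      (L1int hc hca le_rfl ha1) hIad
    have hd0 : Real.sqrt (a ^ 2 - d ^ 2) = 0 := Real.sqrt_eq_zero'.mpr (by nlinarith)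
    rw [← hsplit, hzero, L1ftc hc hca le_rfl ha1, hd0]
    simp

noncomputable def G (s : ℝ) : ℝ := ∫ x in (0:ℝ)..bb s, w s x
noncomputable def hh (s : ℝ) : ℝ := s * G s
noncomputable def J (s : ℝ) : ℝ := ∫ u in (0:ℝ)..1, w s (bb s * u)

lemma G_eq {s : ℝ} (hs0 : 0 < s) (hs1 : s < 1) : G s = bb s * J s := by
  have hb : bb s ≠ 0 := (bb_pos hs0 hs1).ne'
  have := intervalIntegral.integral_comp_mul_left (a := (0:ℝ)) (b := 1) (fun x => w s x) hb
  simp only [mul_zero, mul_one, smul_eq_mul] at this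
  unfold G J
  rw [this, ← mul_assoc, mul_inv_cancel₀ hb, one_mul]

lemma wb_lb {s u : ℝ} (hs0 : 0 < s) (hs1 : s < 1) :
    s ^ 2 * (2 * (-Real.log s) * (1 - u ^ 2)) ≤ Real.exp (-2 * (bb s * u) ^ 2) - s ^ 2 := by
  have h := base_lb hs0 (bb s * u)
  have h2 : (bb s * u) ^ 2 = (-Real.log s) * u ^ 2 := by
    rw [mul_pow, bb_sq hs0 hs1.le]
  calc s ^ 2 * (2 * (-Real.log s) * (1 - u ^ 2))
      = s ^ 2 * (2 * (-Real.log s - (bb s * u) ^ 2)) := by rw [h2]; ring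
    _ ≤ _ := h

lemma hh_contAt {t : ℝ} (ht : t ∈ Ioo (0:ℝ) 1) : ContinuousAt hh t := by
  obtain ⟨ht0, ht1⟩ := ht
  set t₁ : ℝ := t / 2 with ht₁def
  set t₂ : ℝ := (1 + t) / 2 with ht₂def
  have ht₁0 : 0 < t₁ := by positivity
  have ht₂1 : t₂ < 1 := by rw [ht₂def]; linarith
  have ht₂0 : 0 < t₂ := by rw [ht₂def]; linarith
  have hlog₂ : 0 < -Real.log t₂ := by simpa using Real.log_neg ht₂0 ht₂1
  set Kc : ℝ := 2 * t₁ ^ 2 * (-Real.log t₂) with hKc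
  have hKcpos : 0 < Kc := by positivity
  have hbbcont : ContinuousAt bb t := by
    exact Real.continuous_sqrt.continuousAt.comp ((Real.continuousAt_log ht0.ne').neg)
  -- the uniform bound for s ∈ (t₁, t₂), u ∈ (0, 1]
  have hbound : ∀ s ∈ Ioo t₁ t₂, ∀ u ∈ Ioc (0:ℝ) 1,
      w s (bb s * u) ≤ Kc ^ (-(1:ℝ)/2) * (1 - u) ^ (-(1:ℝ)/2) := by
    intro s hs u hu
    have hs0 : 0 < s := ht₁0.trans hs.1
    have hs1 : s < 1 := hs.2.trans ht₂1
    rcases eq_or_lt_of_le hu.2 with h | h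
    · rw [h, mul_one, w_eq_zero hs0 hs1.le le_rfl, sub_self, rpow_nh_of_nonpos le_rfl,
        mul_zero]
    · have hlogs : -Real.log t₂ ≤ -Real.log s := by
        simp only [neg_le_neg_iff]
        exact Real.log_le_log hs0 hs.2.le
      have hlow : Kc * (1 - u) ≤ Real.exp (-2 * (bb s * u) ^ 2) - s ^ 2 := by
        refine le_trans ?_ (wb_lb hs0 hs1)
        have h1 : t₁ ^ 2 ≤ s ^ 2 := by nlinarith [hs.1, ht₁0]
        have h2 : (1 - u) ≤ 1 - u ^ 2 := by nlinarith [hu.1, h]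
        rw [hKc]
        have hu2 : (0:ℝ) ≤ 1 - u := by linarith
        have hu3 : (0:ℝ) ≤ 1 - u ^ 2 := by nlinarith [hu.1]
        have c3 : t₁ ^ 2 * (-Real.log t₂) ≤ s ^ 2 * (-Real.log s) :=
          mul_le_mul h1 hlogs hlog₂.le (sq_nonneg s)
        have A := mul_le_mul_of_nonneg_right c3 hu3
        have B := mul_le_mul_of_nonneg_left h2
          (mul_nonneg (sq_nonneg t₁) hlog₂.le)
        nlinarith [A, B]
      have hpos : 0 < Kc * (1 - u) := mul_pos hKcpos (by linarith)
      calc w s (bb s * u) ≤ (Kc * (1 - u)) ^ (-(1:ℝ)/2) := rpow_nh_le hpos hlow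
        _ = Kc ^ (-(1:ℝ)/2) * (1 - u) ^ (-(1:ℝ)/2) :=
          Real.mul_rpow hKcpos.le (by linarith)
  have hJ : ContinuousAt J t := by
    apply intervalIntegral.continuousAt_of_dominated_interval
      (bound := fun u => Kc ^ (-(1:ℝ)/2) * (1 - u) ^ (-(1:ℝ)/2))
    · refine Filter.Eventually.of_forall fun s => ?_
      exact ((w_meas s).comp (measurable_const.mul measurable_id)).aestronglyMeasurable
    · have hmem : Ioo t₁ t₂ ∈ 𝓝 t := Ioo_mem_nhds (by rw [ht₁def]; linarith)
        (by rw [ht₂def]; linarith)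
      filter_upwards [hmem] with s hs
      refine Filter.Eventually.of_forall fun u hu => ?_
      rw [uIoc_of_le (by norm_num : (0:ℝ) ≤ 1)] at hu
      rw [Real.norm_eq_abs, abs_of_nonneg (w_nonneg _ _)]
      exact hbound s hs u hu
    · have h1 : IntervalIntegrable (fun x : ℝ => x ^ (-(1:ℝ)/2)) volume (1-1) (1-0) :=
        intervalIntegrable_rpow' (by norm_num)
      simpa using ((h1.comp_sub_left 1).const_mul (Kc ^ (-(1:ℝ)/2))).symm
    · have hae : ∀ᵐ u : ℝ, u ≠ 1 := by
        refine (MeasureTheory.ae_iff).mpr ?_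
        simpa using Real.volume_singleton (a := 1)
      filter_upwards [hae] with u hu1 hu
      rw [uIoc_of_le (by norm_num : (0:ℝ) ≤ 1)] at hu
      have hu' : u < 1 := lt_of_le_of_ne hu.2 hu1
      have hbase : ContinuousAt (fun s => Real.exp (-2 * (bb s * u) ^ 2) - s ^ 2) t := by
        apply ContinuousAt.sub
        · exact Real.continuous_exp.continuousAt.comp
            (((hbbcont.mul continuousAt_const).pow 2).const_mul (-2))
        · exact (continuousAt_id.pow 2)
      have hbpos : 0 < Real.exp (-2 * (bb t * u) ^ 2) - t ^ 2 := by
        refine lt_of_lt_of_le ?_ (wb_lb ht0 ht1)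
        have : 0 < -Real.log t := by simpa using Real.log_neg ht0 ht1
        have : 0 < 1 - u ^ 2 := by nlinarith [hu.1]
        positivity
      show ContinuousAt (fun s => (Real.exp (-2 * (bb s * u) ^ 2) - s ^ 2) ^ (-(1:ℝ)/2)) t
      exact hbase.rpow_const (Or.inl hbpos.ne')
  have hev : (fun s => s * (bb s * J s)) =ᶠ[𝓝 t] hh := by
    filter_upwards [Ioo_mem_nhds ht0 ht1] with s hs
    rw [hh, G_eq hs.1 hs.2]
  exact (continuousAt_id.mul (hbbcont.mul hJ)).congr hev

lemma base_nonpos {s x : ℝ} (hs0 : 0 < s) (hs1 : s ≤ 1) (hx : bb s ≤ x) :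
    Real.exp (-2 * x ^ 2) - s ^ 2 ≤ 0 := by
  have hx2 : -Real.log s ≤ x ^ 2 := by
    rw [← bb_sq hs0 hs1]
    exact pow_le_pow_left₀ (bb_nonneg s) hx 2
  have h : Real.exp (-2 * x ^ 2) ≤ Real.exp (2 * Real.log s) := by
    apply Real.exp_le_exp.mpr; nlinarith
  rw [← sq_exp, Real.exp_log hs0] at h
  linarith

lemma w_intZero {s B : ℝ} (hs0 : 0 < s) (hs1 : s ≤ 1) (hB : bb s ≤ B) :
    IntervalIntegrable (w s) volume (bb s) B := by
  apply IntervalIntegrable.mono_fun' (g := fun _ => (0:ℝ)) intervalIntegrable_const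
    ((w_meas s).aestronglyMeasurable)
  refine (ae_restrict_iff' measurableSet_uIoc).mpr (Filter.Eventually.of_forall ?_)
  intro x hx
  rw [uIoc_of_le hB] at hx
  show ‖w s x‖ ≤ 0
  rw [Real.norm_eq_abs, w_eq_zero hs0 hs1 hx.1.le, abs_zero]

lemma w_intZeroVal {s B : ℝ} (hs0 : 0 < s) (hs1 : s ≤ 1) (hB : bb s ≤ B) :
    (∫ x in bb s..B, w s x) = 0 := by
  rw [intervalIntegral.integral_congr (g := fun _ => (0:ℝ))
    (fun x hx => w_eq_zero hs0 hs1 (by rw [uIcc_of_le hB] at hx; exact hx.1))]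
  simp

lemma L1intZero {a d : ℝ} (ha : 0 ≤ a) (had : a ≤ d) :
    IntervalIntegrable (fun s => s * (a ^ 2 - s ^ 2) ^ (-(1:ℝ)/2)) volume a d := by
  apply IntervalIntegrable.mono_fun' (g := fun _ => (0:ℝ)) intervalIntegrable_const
  · apply Measurable.aestronglyMeasurable; apply Measurable.mul measurable_id
    apply Measurable.pow <;> measurability
  · refine (ae_restrict_iff' measurableSet_uIoc).mpr (Filter.Eventually.of_forall ?_)
    intro s hs
    rw [uIoc_of_le had] at hs
    show ‖s * (a ^ 2 - s ^ 2) ^ (-(1:ℝ)/2)‖ ≤ 0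
    rw [Real.norm_eq_abs, L1zero ha hs.1.le, abs_zero]

lemma L1intFull {a c d : ℝ} (hc : 0 < c) (hca : c ≤ a) (ha1 : a ≤ 1) (hcd : c ≤ d) :
    IntervalIntegrable (fun s => s * (a ^ 2 - s ^ 2) ^ (-(1:ℝ)/2)) volume c d := by
  rcases le_or_gt d a with hd | hd
  · exact L1int hc hcd hd ha1
  · exact (L1int hc hca le_rfl ha1).trans (L1intZero (hc.le.trans hca) hd.le)

lemma sqrt_integrand_eq {t' x : ℝ} (h : Real.exp (-x ^ 2) ^ 2 = Real.exp (-2 * x ^ 2)) :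
    True := trivial

lemma rep {t' t₂ : ℝ} (h0 : 0 < t') (h12 : t' ≤ t₂) (h21 : t₂ < 1) :
    (∫ x in (0:ℝ)..bb t', Real.sqrt (Real.exp (-2 * x ^ 2) - t' ^ 2))
      - (∫ x in (0:ℝ)..bb t₂, Real.sqrt (Real.exp (-2 * x ^ 2) - t₂ ^ 2))
      = ∫ s in t'..t₂, hh s := by
  set B := bb t' with hBdef
  have ht'1 : t' < 1 := lt_of_le_of_lt h12 h21
  have hB0 : 0 ≤ B := bb_nonneg t'
  have ht₂0 : 0 < t₂ := h0.trans_le h12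
  have hb2B : bb t₂ ≤ B := bb_mono h0 h12
  -- the exp facts
  have hax : ∀ x : ℝ, Real.exp (-x ^ 2) ^ 2 = Real.exp (-2 * x ^ 2) := by
    intro x; rw [sq_exp]; ring_nf
  have haxle1 : ∀ x : ℝ, Real.exp (-x ^ 2) ≤ 1 := fun x =>
    Real.exp_le_one_iff.mpr (by nlinarith [sq_nonneg x])
  have haxge : ∀ x ∈ Icc (0:ℝ) B, t' ≤ Real.exp (-x ^ 2) := by
    intro x hx
    have hx2 : x ^ 2 ≤ -Real.log t' := by
      rw [← bb_sq h0 ht'1.le]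
      exact pow_le_pow_left₀ hx.1 hx.2 2
    calc t' = Real.exp (Real.log t') := (Real.exp_log h0).symm
      _ ≤ Real.exp (-x ^ 2) := Real.exp_le_exp.mpr (by linarith)
  -- Step A : rewrite F t₂ over 0..B
  have hsqcont : ∀ c : ℝ, Continuous fun x : ℝ => Real.sqrt (Real.exp (-2 * x ^ 2) - c ^ 2) :=
    fun c => Real.continuous_sqrt.comp (by continuity)
  have hstepA : (∫ x in (0:ℝ)..bb t₂, Real.sqrt (Real.exp (-2 * x ^ 2) - t₂ ^ 2))
      = ∫ x in (0:ℝ)..B, Real.sqrt (Real.exp (-2 * x ^ 2) - t₂ ^ 2) := by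
    have hzero : (∫ x in bb t₂..B, Real.sqrt (Real.exp (-2 * x ^ 2) - t₂ ^ 2)) = 0 := by
      rw [intervalIntegral.integral_congr (g := fun _ => (0:ℝ))]
      · simp
      · intro x hx
        rw [uIcc_of_le hb2B] at hx
        exact Real.sqrt_eq_zero'.mpr (base_nonpos ht₂0 h21.le hx.1)
    rw [← intervalIntegral.integral_add_adjacent_intervals
      ((hsqcont t₂).intervalIntegrable 0 (bb t₂)) ((hsqcont t₂).intervalIntegrable (bb t₂) B),
      hzero, add_zero]
  -- Step B+C : difference as a double integral
  have hstepBC : (∫ x in (0:ℝ)..B, Real.sqrt (Real.exp (-2 * x ^ 2) - t' ^ 2))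
      - (∫ x in (0:ℝ)..B, Real.sqrt (Real.exp (-2 * x ^ 2) - t₂ ^ 2))
      = ∫ x in (0:ℝ)..B, ∫ s in t'..t₂, s * w s x := by
    rw [← intervalIntegral.integral_sub ((hsqcont t').intervalIntegrable 0 B)
      ((hsqcont t₂).intervalIntegrable 0 B)]
    apply intervalIntegral.integral_congr
    intro x hx
    rw [uIcc_of_le hB0] at hx
    have h1 := L1 (a := Real.exp (-x ^ 2)) h0 (haxge x hx) (haxle1 x) h12
    rw [hax x] at h1
    show _ = ∫ s in t'..t₂, s * w s x
    simp only [w]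
    exact h1.symm
  -- Step D : Fubini
  have hmeasg : AEStronglyMeasurable (Function.uncurry fun x s => s * w s x)
      ((volume.restrict (Ioc (0:ℝ) B)).prod (volume.restrict (Ioc t' t₂))) := by
    apply Measurable.aestronglyMeasurable
    apply Measurable.mul measurable_snd
    simp only [w]
    apply Measurable.pow
    · exact ((Real.continuous_exp.comp (continuous_const.mul
        (continuous_fst.pow 2))).sub (continuous_snd.pow 2)).measurable
    · exact measurable_const
  have hint : Integrable (Function.uncurry fun x s => s * w s x)
      ((volume.restrict (Ioc (0:ℝ) B)).prod (volume.restrict (Ioc t' t₂))) := by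
    rw [MeasureTheory.integrable_prod_iff hmeasg]
    constructor
    · refine (ae_restrict_iff' measurableSet_Ioc).mpr (Filter.Eventually.of_forall ?_)
      intro x hx
      have hii : IntervalIntegrable
          (fun s => s * (Real.exp (-x ^ 2) ^ 2 - s ^ 2) ^ (-(1:ℝ)/2)) volume t' t₂ :=
        L1intFull h0 (haxge x ⟨hx.1.le, hx.2⟩) (haxle1 x) h12
      rw [hax x] at hii
      have h2 := intervalIntegrable_iff.mp hii
      rw [uIoc_of_le h12] at h2
      simp only [w, Function.uncurry_apply_pair]; exact h2
    · have hkey : ∀ x ∈ Ioc (0:ℝ) B,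
          (∫ s in Ioc t' t₂, ‖s * w s x‖)
            = Real.sqrt (Real.exp (-2 * x ^ 2) - t' ^ 2)
              - Real.sqrt (Real.exp (-2 * x ^ 2) - t₂ ^ 2) := by
        intro x hx
        have hnorm : EqOn (fun s => ‖s * w s x‖) (fun s => s * w s x) (Ioc t' t₂) := by
          intro s hs
          show ‖s * w s x‖ = s * w s x
          rw [Real.norm_eq_abs,
            abs_of_nonneg (mul_nonneg (h0.trans hs.1).le (w_nonneg _ _))]
        rw [MeasureTheory.setIntegral_congr_fun measurableSet_Ioc hnorm,
          ← intervalIntegral.integral_of_le h12]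
        have h1 := L1 (a := Real.exp (-x ^ 2)) h0 (haxge x ⟨hx.1.le, hx.2⟩) (haxle1 x) h12
        rw [hax x] at h1
        simpa only [w] using h1
      apply MeasureTheory.Integrable.congr
        (f := fun x => Real.sqrt (Real.exp (-2 * x ^ 2) - t' ^ 2)
          - Real.sqrt (Real.exp (-2 * x ^ 2) - t₂ ^ 2))
      · exact ((hsqcont t').sub (hsqcont t₂)).integrableOn_Ioc
      · refine (ae_restrict_iff' measurableSet_Ioc).mpr
          (Filter.Eventually.of_forall fun x hx => ?_)
        exact (hkey x hx).symm
  have hswap := MeasureTheory.integral_integral_swap hint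
  -- Step E : conclude
  rw [hstepA, hstepBC]
  simp_rw [intervalIntegral.integral_of_le h12]
  rw [intervalIntegral.integral_of_le hB0]
  rw [hswap]
  apply MeasureTheory.setIntegral_congr_fun measurableSet_Ioc
  intro s hs
  have hs0 : 0 < s := h0.trans hs.1
  have hs1 : s < 1 := lt_of_le_of_lt hs.2 h21
  have hbbB : bb s ≤ B := bb_mono h0 hs.1.le
  show (∫ x in Ioc (0:ℝ) B, s * w s x) = hh s
  rw [← intervalIntegral.integral_of_le hB0, intervalIntegral.integral_const_mul,
    ← intervalIntegral.integral_add_adjacent_intervals (w_int hs0 hs1)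
      (w_intZero hs0 hs1.le hbbB),
    w_intZeroVal hs0 hs1.le hbbB, add_zero]
  rfl

/-- `F` is differentiable on `(0,1)` with
`F′(t) = −t ∫_0^{√(−ln t)} (e^{−2x²} − t²)^{−1/2} dx`, and the latter improper
integral converges. -/
theorem F_hasDerivAt (t : ℝ) (ht : t ∈ Set.Ioo (0 : ℝ) 1) :
    IntervalIntegrable (fun x : ℝ => (Real.exp (-2 * x ^ 2) - t ^ 2) ^ (-(1 : ℝ) / 2))
      volume 0 (Real.sqrt (-Real.log t)) ∧
    HasDerivAt F
      (-t * ∫ x in (0 : ℝ)..(Real.sqrt (-Real.log t)),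
        (Real.exp (-2 * x ^ 2) - t ^ 2) ^ (-(1 : ℝ) / 2)) t := by
  obtain ⟨ht0, ht1⟩ := ht
  constructor
  · exact w_int ht0 ht1
  · set t₂ : ℝ := (1 + t) / 2 with ht₂def
    have h1 : t < t₂ := by rw [ht₂def]; linarith
    have h2 : t₂ < 1 := by rw [ht₂def]; linarith
    have hIht₂ : IntervalIntegrable hh volume t t₂ := by
      apply ContinuousOn.intervalIntegrable
      intro s hs
      rw [uIcc_of_le h1.le] at hs
      exact (hh_contAt ⟨lt_of_lt_of_le ht0 hs.1, lt_of_le_of_lt hs.2 h2⟩).continuousWithinAt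
    have hmeasf : StronglyMeasurableAtFilter hh (𝓝 t) := by
      refine ⟨Ioo 0 1, Ioo_mem_nhds ht0 ht1, ?_⟩
      exact ContinuousOn.aestronglyMeasurable
        (fun s hs => (hh_contAt hs).continuousWithinAt) measurableSet_Ioo
    have hd := intervalIntegral.integral_hasDerivAt_left hIht₂ hmeasf (hh_contAt ⟨ht0, ht1⟩)
    have hd2 : HasDerivAt (fun u => F t₂ + ∫ s in u..t₂, hh s) (-hh t) t :=
      hd.const_add (F t₂)
    have hev : F =ᶠ[𝓝 t] (fun u => F t₂ + ∫ s in u..t₂, hh s) := by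
      filter_upwards [Ioo_mem_nhds ht0 h1] with u hu
      have hrep := rep (t' := u) hu.1 hu.2.le h2
      have hFu : F u = ∫ x in (0:ℝ)..bb u, Real.sqrt (Real.exp (-2 * x ^ 2) - u ^ 2) := rfl
      have hFt₂ : F t₂ = ∫ x in (0:ℝ)..bb t₂,
          Real.sqrt (Real.exp (-2 * x ^ 2) - t₂ ^ 2) := rfl
      show F u = F t₂ + ∫ s in u..t₂, hh s
      rw [hFu, hFt₂]
      linarith [hrep]
    have hfinal := hd2.congr_of_eventuallyEq hev
    refine hfinal.congr_deriv (Eq.symm ?_)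
    show -t * _ = -hh t
    rw [hh]
    show -t * G t = -(t * G t)
    ring
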